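/- Fix the exponential utility u(w) = (1 − e^{−rw})/r with r ≠ 0 and an arbitrary quasiprobability parameter q ∈ ℝ. For any density matrix ρ on ℂ^{d_S}, the optimal expected utility equals 𝓤(ρ) = (1/r)(1 − Σ_k u_k e^{r ε_k}), where u_1 ≥ u_2 ≥ ... ≥ u_{d_S} are the eigenvalues, in decreasing order, of the Hermitian matrix ρ̃ = (1/2)(e^{−rq H_S} ρ e^{−r(1−q) H_S} + e^{−r(1−q) H_S} ρ e^{−rq H_S}). -/

import Mathlib

open Matrix BigOperators Finset Kronecker
open scoped ComplexOrder

noncomputable section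

namespace Daemonic

/-- The outer product `|x⟩⟨y|` as a matrix. -/
def ketbra {ι : Type*} [Fintype ι] (x y : ι → ℂ) : Matrix ι ι ℂ :=
  Matrix.vecMulVec x (star y)

/-- A family of vectors is orthonormal. -/
def ONFam {ι κ : Type*} [Fintype ι] [DecidableEq κ] (v : κ → ι → ℂ) : Prop :=
  ∀ i j, star (v i) ⬝ᵥ v j = if i = j then 1 else 0

/-- A density matrix: positive semidefinite with unit trace. -/
def IsDensity {ι : Type*} [Fintype ι] (ρ : Matrix ι ι ℂ) : Prop :=
  ρ.PosSemidef ∧ ρ.trace = 1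

/-- The matrix element `⟨x|M|y⟩`. -/
def matElem {ι : Type*} [Fintype ι] (M : Matrix ι ι ℂ) (x y : ι → ℂ) : ℂ :=
  star x ⬝ᵥ (M *ᵥ y)

/-- The Hamiltonian `H_S = ∑ₖ εₖ |εₖ⟩⟨εₖ|`. -/
def ham {n : ℕ} (ε : Fin n → ℝ) (v : Fin n → Fin n → ℂ) : Matrix (Fin n) (Fin n) ℂ :=
  ∑ k, (ε k : ℂ) • ketbra (v k) (v k)

/-- `e^{t H_S} = ∑ₖ e^{t εₖ} |εₖ⟩⟨εₖ|` (functional calculus in the eigenbasis of `H_S`). -/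
def expHam {n : ℕ} (ε : Fin n → ℝ) (v : Fin n → Fin n → ℂ) (t : ℝ) :
    Matrix (Fin n) (Fin n) ℂ :=
  ∑ k, (Real.exp (t * ε k) : ℂ) • ketbra (v k) (v k)

/-- The expected utility `⟨u(w)⟩_{ρ,U}` for quasiprobability parameter `q`,
with respect to the eigenvalues `ε` and orthonormal eigenvectors `v` of `H_S`. -/
def expUtil {n : ℕ} (u : ℝ → ℝ) (q : ℝ) (ε : Fin n → ℝ) (v : Fin n → Fin n → ℂ)
    (ρ U : Matrix (Fin n) (Fin n) ℂ) : ℝ :=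
  ∑ i, ∑ j, ∑ k,
    (matElem ρ (v i) (v j) * matElem Uᴴ (v j) (v k) * matElem U (v k) (v i)).re *
      u (q * ε i + (1 - q) * ε j - ε k)

/-- The optimal expected utility `𝓤(ρ) = max over unitaries U of ⟨u(w)⟩_{ρ,U}`. -/
def optUtil {n : ℕ} (u : ℝ → ℝ) (q : ℝ) (ε : Fin n → ℝ) (v : Fin n → Fin n → ℂ)
    (ρ : Matrix (Fin n) (Fin n) ℂ) : ℝ :=
  ⨆ U : Matrix.unitaryGroup (Fin n) ℂ, expUtil u q ε v ρ (U : Matrix (Fin n) (Fin n) ℂ)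

/-- The exponential utility `u(w) = (1 - e^{-r w})/r`. -/
def expUtility (r : ℝ) : ℝ → ℝ := fun w => (1 - Real.exp (-r * w)) / r

/-- The partial trace over the ancilla. -/
def ptraceA {dS dA : ℕ} (ρSA : Matrix (Fin dS × Fin dA) (Fin dS × Fin dA) ℂ) :
    Matrix (Fin dS) (Fin dS) ℂ :=
  Matrix.of fun i j => ∑ a, ρSA (i, a) (j, a)

/-- The unnormalized conditional state `Tr_A((I ⊗ Π_a) ρ_SA (I ⊗ Π_a))`, where
`Π_a = |a⟩⟨a|` projects onto the vector `w a` of an orthonormal basis `w` of the ancilla. -/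
def condUnnorm {dS dA : ℕ} (w : Fin dA → Fin dA → ℂ)
    (ρSA : Matrix (Fin dS × Fin dA) (Fin dS × Fin dA) ℂ) (a : Fin dA) :
    Matrix (Fin dS) (Fin dS) ℂ :=
  Matrix.of fun i j => ∑ c, ∑ d, ρSA (i, c) (j, d) * (w a d * star (w a c))

/-- The outcome probability `p_a = Tr((I ⊗ Π_a) ρ_SA)`. -/
def prob {dS dA : ℕ} (w : Fin dA → Fin dA → ℂ)
    (ρSA : Matrix (Fin dS × Fin dA) (Fin dS × Fin dA) ℂ) (a : Fin dA) : ℝ :=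
  ((condUnnorm w ρSA a).trace).re

/-- The conditional state `ρ_{S|a}`. -/
def condState {dS dA : ℕ} (w : Fin dA → Fin dA → ℂ)
    (ρSA : Matrix (Fin dS × Fin dA) (Fin dS × Fin dA) ℂ) (a : Fin dA) :
    Matrix (Fin dS) (Fin dS) ℂ :=
  ((prob w ρSA a : ℂ))⁻¹ • condUnnorm w ρSA a

/-- The daemonic expected utility `𝓤_{{Π_a}}(ρ_SA) = ∑_a p_a 𝓤(ρ_{S|a})`. -/
def daemonicUtil {dS dA : ℕ} (u : ℝ → ℝ) (q : ℝ) (ε : Fin dS → ℝ)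
    (v : Fin dS → Fin dS → ℂ) (w : Fin dA → Fin dA → ℂ)
    (ρSA : Matrix (Fin dS × Fin dA) (Fin dS × Fin dA) ℂ) : ℝ :=
  ∑ a, prob w ρSA a * optUtil u q ε v (condState w ρSA a)

/-- The maximum daemonic gain `δ𝓤(ρ_SA)`, maximizing over all orthonormal bases of the
ancilla (equivalently, over the rows of all unitary matrices). -/
def daemonicGain {dS dA : ℕ} (u : ℝ → ℝ) (q : ℝ) (ε : Fin dS → ℝ)
    (v : Fin dS → Fin dS → ℂ)
    (ρSA : Matrix (Fin dS × Fin dA) (Fin dS × Fin dA) ℂ) : ℝ :=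
  (⨆ V : Matrix.unitaryGroup (Fin dA) ℂ,
      daemonicUtil u q ε v (fun a => (V : Matrix (Fin dA) (Fin dA) ℂ) a) ρSA) -
    optUtil u q ε v (ptraceA ρSA)

/-- The ergotropy of a (possibly unnormalized) state `σ` with respect to a Hamiltonian `H`:
`ℰ_H(σ) = max over unitaries U of (Tr(Hσ) - Tr(H U σ U†))`. -/
def ergotropyH {n : ℕ} (H σ : Matrix (Fin n) (Fin n) ℂ) : ℝ :=
  ⨆ U : Matrix.unitaryGroup (Fin n) ℂ,
    ((H * σ).trace -
      (H * ((U : Matrix (Fin n) (Fin n) ℂ) * σ * (U : Matrix (Fin n) (Fin n) ℂ)ᴴ)).trace).re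

/-- A separable bipartite state: a convex combination of product states. -/
def IsSeparable {dS dA : ℕ} (ρSA : Matrix (Fin dS × Fin dA) (Fin dS × Fin dA) ℂ) : Prop :=
  ∃ (m : ℕ) (p : Fin m → ℝ) (σ : Fin m → Matrix (Fin dS) (Fin dS) ℂ)
    (τ : Fin m → Matrix (Fin dA) (Fin dA) ℂ),
    (∀ k, 0 ≤ p k) ∧ (∑ k, p k = 1) ∧ (∀ k, IsDensity (σ k)) ∧ (∀ k, IsDensity (τ k)) ∧
    ρSA = ∑ k, (p k : ℂ) • (σ k ⊗ₖ τ k)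

/-- A classical-quantum state `ρ_SA = ∑ₖ pₖ Pₖ ⊗ ρᴬₖ` with `Pₖ` mutually orthogonal
rank-one projectors summing to the identity. -/
def IsClassicalQuantum {dS dA : ℕ}
    (ρSA : Matrix (Fin dS × Fin dA) (Fin dS × Fin dA) ℂ) : Prop :=
  ∃ (p : Fin dS → ℝ) (ψ : Fin dS → Fin dS → ℂ) (τ : Fin dS → Matrix (Fin dA) (Fin dA) ℂ),
    (∀ k, 0 ≤ p k) ∧ (∑ k, p k = 1) ∧ ONFam ψ ∧ (∀ k, IsDensity (τ k)) ∧
    ρSA = ∑ k, (p k : ℂ) • (ketbra (ψ k) (ψ k) ⊗ₖ τ k)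

/-- The dephasing map associated with an orthonormal basis `v`. -/
def dephase {n : ℕ} (v : Fin n → Fin n → ℂ) (ρ : Matrix (Fin n) (Fin n) ℂ) :
    Matrix (Fin n) (Fin n) ℂ :=
  ∑ k, ketbra (v k) (v k) * ρ * ketbra (v k) (v k)

lemma abel_id (u w : ℕ → ℝ) (n : ℕ) :
    ∑ l ∈ Finset.range n, u l * w l
      = (∑ m ∈ Finset.range n, (u m - u (m+1)) * (∑ l ∈ Finset.range (m+1), w l))
        + u n * (∑ l ∈ Finset.range n, w l) := by
  induction n with
  | zero => simp
  | succ n ih =>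
      rw [Finset.sum_range_succ, ih, Finset.sum_range_succ
        (f := fun m => (u m - u (m+1)) * ∑ l ∈ Finset.range (m+1), w l),
        Finset.sum_range_succ w n]
      ring

lemma abel_nonneg (u w : ℕ → ℝ) (n : ℕ) (hu : ∀ m, m < n → u (m+1) ≤ u m)
    (hP : ∀ m, m ≤ n → 0 ≤ ∑ l ∈ Finset.range m, w l)
    (hT : ∑ l ∈ Finset.range n, w l = 0) :
    0 ≤ ∑ l ∈ Finset.range n, u l * w l := by
  rw [abel_id u w n, hT, mul_zero, add_zero]
  apply Finset.sum_nonneg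
  intro m hm
  rw [Finset.mem_range] at hm
  exact mul_nonneg (by linarith [hu m hm]) (hP (m+1) (by omega))

lemma range_filter_lt (n m : ℕ) (hm : m ≤ n) :
    (Finset.range n).filter (fun l => l < m) = Finset.range m := by
  ext l; simp only [Finset.mem_filter, Finset.mem_range]; omega

lemma ds_ineq {n : ℕ} (a u : Fin n → ℝ) (ha : Monotone a) (hu : Antitone u)
    (B : Fin n → Fin n → ℝ) (hB : ∀ k l, 0 ≤ B k l)
    (hrow : ∀ k, ∑ l, B k l = 1) (hcol : ∀ l, ∑ k, B k l = 1) :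
    ∑ k, a k * u k ≤ ∑ k, ∑ l, B k l * (a k * u l) := by
  rcases Nat.eq_zero_or_pos n with hn | hn
  · subst hn; simp
  set W1 : Fin n → ℕ → ℝ := fun k l => if h : l < n then B k ⟨l, h⟩ else 0 with hW1
  set A : ℕ → ℝ := fun l => if h : l < n then a ⟨l, h⟩ else 0 with hA
  set w : ℕ → ℝ := fun l => (∑ k, W1 k l * a k) - A l with hw
  set u' : ℕ → ℝ := fun i => u ⟨min i (n-1), by omega⟩ with hu'
  -- row sums of W1 over range n
  have hW1row : ∀ k, ∑ l ∈ Finset.range n, W1 k l = 1 := by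
    intro k
    rw [← Fin.sum_univ_eq_sum_range (fun l => W1 k l) n]
    rw [← hrow k]
    apply Finset.sum_congr rfl
    intro l _
    simp [hW1, l.isLt]
  have hW1col : ∀ l, l < n → ∑ k, W1 k l = 1 := by
    intro l hl
    have : ∀ k, W1 k l = B k ⟨l, hl⟩ := fun k => by simp [hW1, hl]
    simp_rw [this]; exact hcol ⟨l, hl⟩
  have hW1nn : ∀ k l, 0 ≤ W1 k l := by
    intro k l; simp only [hW1]; split <;> simp [hB]
  -- partial sums nonneg
  have hP : ∀ m, m ≤ n → 0 ≤ ∑ l ∈ Finset.range m, w l := by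
    intro m hm
    rcases Nat.eq_zero_or_pos m with hm0 | hm0
    · subst hm0; simp
    set M : Fin n := ⟨m - 1, by omega⟩ with hM
    set c : Fin n → ℝ := fun k => ∑ l ∈ Finset.range m, W1 k l with hc
    have hχ : ∑ k : Fin n, (if (k : ℕ) < m then (1:ℝ) else 0) = m := by
      rw [Fin.sum_univ_eq_sum_range (fun l => if l < m then (1:ℝ) else 0) n,
        ← Finset.sum_filter, range_filter_lt n m hm]
      simp
    have hsum : ∑ l ∈ Finset.range m, w l
        = (∑ k, c k * a k) - ∑ k : Fin n, (if (k : ℕ) < m then a k else 0) := by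
      simp only [hw]
      rw [Finset.sum_sub_distrib]
      congr 1
      · rw [Finset.sum_comm]
        apply Finset.sum_congr rfl
        intro k _
        rw [← Finset.sum_mul]
      · rw [← range_filter_lt n m hm, Finset.sum_filter,
          ← Fin.sum_univ_eq_sum_range (fun l => if l < m then A l else 0) n]
        apply Finset.sum_congr rfl
        intro k _
        by_cases h : (k : ℕ) < m <;> simp [h, hA, k.isLt]
    rw [hsum, ← Finset.sum_sub_distrib]
    have hck1 : ∀ k, c k ≤ 1 := by
      intro k
      rw [← hW1row k]
      apply Finset.sum_le_sum_of_subset_of_nonneg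
      · exact Finset.range_subset_range.mpr hm
      · intro l _ _; exact hW1nn k l
    have hck0 : ∀ k, 0 ≤ c k := fun k => Finset.sum_nonneg fun l _ => hW1nn k l
    have key : ∀ k, a M * (c k - (if (k : ℕ) < m then 1 else 0))
        ≤ c k * a k - (if (k : ℕ) < m then a k else 0) := by
      intro k
      by_cases h : (k : ℕ) < m
      · simp only [h, if_true]
        have hak : a k ≤ a M := ha (show k ≤ M by rw [Fin.le_def]; simp only [hM]; omega)
        nlinarith [hck1 k]
      · simp only [h, if_false]
        have hak : a M ≤ a k := ha (show M ≤ k by rw [Fin.le_def]; simp only [hM]; omega)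
        nlinarith [hck0 k]
    have hsc : ∑ k, c k = m := by
      rw [hc, Finset.sum_comm]
      have h3 : ∀ l ∈ Finset.range m, ∑ k, W1 k l = 1 := fun l hl =>
        hW1col l (by rw [Finset.mem_range] at hl; omega)
      rw [Finset.sum_congr rfl h3]
      simp
    calc (0:ℝ) = ∑ k, a M * (c k - (if (k : ℕ) < m then 1 else 0)) := by
          rw [← Finset.mul_sum, Finset.sum_sub_distrib, hsc, hχ]
          ring
      _ ≤ ∑ k, (c k * a k - (if (k : ℕ) < m then a k else 0)) :=
          Finset.sum_le_sum fun k _ => key k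
  -- total sum zero
  have hT : ∑ l ∈ Finset.range n, w l = 0 := by
    have h1 : ∑ l ∈ Finset.range n, w l
        = ∑ l : Fin n, ((∑ k, B k l * a k) - a l) := by
      rw [← Fin.sum_univ_eq_sum_range w n]
      apply Finset.sum_congr rfl
      intro l _
      simp [hw, hW1, hA, l.isLt]
    rw [h1, Finset.sum_sub_distrib, Finset.sum_comm]
    have h2 : ∀ k : Fin n, ∑ l : Fin n, B k l * a k = a k := by
      intro k; rw [← Finset.sum_mul, hrow, one_mul]
    rw [Finset.sum_congr rfl fun k _ => h2 k]
    ring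
  -- antitone u'
  have hu'' : ∀ m, m < n → u' (m+1) ≤ u' m := by
    intro m _
    apply hu
    rw [Fin.le_def]
    simp only [hu']
    omega
  have habel := abel_nonneg u' w n hu'' hP hT
  have hfin : ∑ l ∈ Finset.range n, u' l * w l
      = (∑ k, ∑ l, B k l * (a k * u l)) - ∑ k, a k * u k := by
    have h1 : ∑ l ∈ Finset.range n, u' l * w l
        = ∑ l : Fin n, u l * ((∑ k, B k l * a k) - a l) := by
      rw [← Fin.sum_univ_eq_sum_range (fun l => u' l * w l) n]
      apply Finset.sum_congr rfl
      intro l _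
      have e1 : u' (l : ℕ) = u l := by
        simp only [hu']
        congr 1
        rw [Fin.ext_iff]
        simp
        omega
      have e2 : w (l : ℕ) = (∑ k, B k l * a k) - a l := by
        simp [hw, hW1, hA, l.isLt]
      rw [e1, e2]
    rw [h1]
    simp_rw [mul_sub, Finset.sum_sub_distrib]
    congr 1
    · rw [Finset.sum_comm]
      apply Finset.sum_congr rfl; intro k _
      rw [Finset.mul_sum]
      apply Finset.sum_congr rfl; intro l _
      ring
    · apply Finset.sum_congr rfl; intro l _; ring
  rw [hfin] at habel
  linarith

lemma ketbra_mulVec {n : ℕ} (z w u : Fin n → ℂ) :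
    ketbra z w *ᵥ u = (star w ⬝ᵥ u) • z := by
  ext i
  simp [ketbra, mulVec, dotProduct, vecMulVec_apply, Finset.mul_sum, mul_comm, mul_assoc, mul_left_comm]

lemma sum_rot3 {α β γ : Type*} [Fintype α] [Fintype β] [Fintype γ] (f : α → β → γ → ℂ) :
    ∑ a, ∑ b, ∑ c, f a b c = ∑ c, ∑ a, ∑ b, f a b c := by
  have h : ∀ a, ∑ b, ∑ c, f a b c = ∑ c, ∑ b, f a b c := fun a => Finset.sum_comm
  simp_rw [h]
  exact Finset.sum_comm

lemma matElem_mul_ketbra_mul {n : ℕ} (M N : Matrix (Fin n) (Fin n) ℂ) (z w x y : Fin n → ℂ) :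
    matElem (M * ketbra z w * N) x y = matElem M x z * matElem N w y := by
  simp only [matElem, ← mulVec_mulVec, ketbra_mulVec, mulVec_smul, dotProduct_smul,
    smul_eq_mul]
  ring

lemma matElem_one {n : ℕ} (x y : Fin n → ℂ) : matElem 1 x y = star x ⬝ᵥ y := by
  simp [matElem]

lemma matElem_conjTranspose {n : ℕ} (M : Matrix (Fin n) (Fin n) ℂ) (x y : Fin n → ℂ) :
    matElem Mᴴ x y = star (matElem M y x) := by
  simp only [matElem, dotProduct, mulVec, conjTranspose_apply, Pi.star_apply, star_sum, star_mul',
    star_star, Finset.mul_sum, Finset.sum_mul]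
  rw [Finset.sum_comm]
  apply Finset.sum_congr rfl; intro p _
  apply Finset.sum_congr rfl; intro t _
  ring

lemma matElem_sum {n m : ℕ} (f : Fin m → Matrix (Fin n) (Fin n) ℂ) (x y : Fin n → ℂ) :
    matElem (∑ k, f k) x y = ∑ k, matElem (f k) x y := by
  simp only [matElem, dotProduct, mulVec, Matrix.sum_apply, Finset.sum_mul, Finset.mul_sum]
  rw [Finset.sum_comm, sum_rot3]
  exact Finset.sum_congr rfl fun k _ => Finset.sum_comm

lemma matElem_smul {n : ℕ} (c : ℂ) (M : Matrix (Fin n) (Fin n) ℂ) (x y : Fin n → ℂ) :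
    matElem (c • M) x y = c * matElem M x y := by
  simp [matElem, smul_mulVec, dotProduct_smul]

lemma ketbra_conjTranspose {n : ℕ} (x y : Fin n → ℂ) : (ketbra x y)ᴴ = ketbra y x := by
  ext i j; simp [ketbra, vecMulVec_apply, mul_comm]

lemma ONFam.complete {n : ℕ} {v : Fin n → Fin n → ℂ} (hv : ONFam v) :
    ∑ k, ketbra (v k) (v k) = 1 := by
  have h1 : (Matrix.of fun k i => star (v k i)) * (Matrix.of fun k i => star (v k i))ᴴ = 1 := by
    ext k l
    simpa [Matrix.mul_apply, dotProduct, mul_comm, Matrix.one_apply] using hv k l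
  have h2 := mul_eq_one_comm.mp h1
  ext i j
  have := congrFun (congrFun h2 i) j
  simp only [Matrix.mul_apply, Matrix.conjTranspose_apply, Matrix.of_apply, star_star] at this
  rw [Matrix.sum_apply, Matrix.one_apply]
  simp only [ketbra, vecMulVec_apply, Pi.star_apply]
  simpa [Matrix.one_apply] using this

lemma insert_basis {n : ℕ} {b : Fin n → Fin n → ℂ} (hb : ∑ k, ketbra (b k) (b k) = 1)
    (M N : Matrix (Fin n) (Fin n) ℂ) (x y : Fin n → ℂ) :
    ∑ k, matElem M x (b k) * matElem N (b k) y = matElem (M * N) x y := by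
  have h : ∀ k, matElem M x (b k) * matElem N (b k) y
      = matElem (M * ketbra (b k) (b k) * N) x y := fun k =>
    (matElem_mul_ketbra_mul M N (b k) (b k) x y).symm
  simp_rw [h]
  rw [← matElem_sum fun k => M * ketbra (b k) (b k) * N]
  congr 1
  rw [← Finset.sum_mul, ← Finset.mul_sum, hb, mul_one]

lemma trace_ketbra {n : ℕ} (M : Matrix (Fin n) (Fin n) ℂ) (x y : Fin n → ℂ) :
    (M * ketbra x y).trace = matElem M y x := by
  simp only [Matrix.trace, Matrix.diag, Matrix.mul_apply, ketbra, vecMulVec_apply,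
    Pi.star_apply, matElem, dotProduct, mulVec, Finset.mul_sum]
  apply Finset.sum_congr rfl; intro p _
  apply Finset.sum_congr rfl; intro t _
  ring

lemma sum_matElem_diag {n : ℕ} {b : Fin n → Fin n → ℂ} (hb : ∑ k, ketbra (b k) (b k) = 1)
    (M : Matrix (Fin n) (Fin n) ℂ) :
    ∑ i, matElem M (b i) (b i) = M.trace := by
  have h : ∀ i, matElem M (b i) (b i) = (M * ketbra (b i) (b i)).trace := fun i =>
    (trace_ketbra M (b i) (b i)).symm
  simp_rw [h]
  rw [← Matrix.trace_sum, ← Finset.mul_sum, hb, mul_one]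

lemma ketbra_mul_ketbra {n : ℕ} (x y z w : Fin n → ℂ) :
    ketbra x y * ketbra z w = (star y ⬝ᵥ z) • ketbra x w := by
  ext i j
  simp only [Matrix.mul_apply, ketbra, vecMulVec_apply, Pi.star_apply, Matrix.smul_apply,
    dotProduct, smul_eq_mul, Finset.sum_mul, Finset.mul_sum]
  apply Finset.sum_congr rfl; intro t _
  ring

lemma matElem_ketbra {n : ℕ} (z w x y : Fin n → ℂ) :
    matElem (ketbra z w) x y = (star x ⬝ᵥ z) * (star w ⬝ᵥ y) := by
  have := matElem_mul_ketbra_mul (1 : Matrix (Fin n) (Fin n) ℂ) 1 z w x y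
  rw [one_mul, mul_one] at this
  rw [this, matElem_one, matElem_one]

lemma expHam_herm {n : ℕ} (ε : Fin n → ℝ) (v : Fin n → Fin n → ℂ) (t : ℝ) :
    (expHam ε v t)ᴴ = expHam ε v t := by
  simp only [expHam, conjTranspose_sum, conjTranspose_smul, ketbra_conjTranspose,
    Complex.star_def, Complex.conj_ofReal]

lemma matElem_ketbra_mul_mul_ketbra {n : ℕ} (M : Matrix (Fin n) (Fin n) ℂ)
    (x y z w p q : Fin n → ℂ) :
    matElem (ketbra x y * M * ketbra z w) p q
      = (star p ⬝ᵥ x) * (matElem M y z * (star w ⬝ᵥ q)) := by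
  have h1 : ketbra x y * M * ketbra z w = 1 * ketbra x y * (M * ketbra z w * 1) := by
    rw [one_mul, mul_one, mul_assoc]
  rw [h1, matElem_mul_ketbra_mul, matElem_mul_ketbra_mul, matElem_one, matElem_one]

lemma matElem_expHam {n : ℕ} {ε : Fin n → ℝ} {v : Fin n → Fin n → ℂ} (hv : ONFam v)
    (s t : ℝ) (M : Matrix (Fin n) (Fin n) ℂ) (i j : Fin n) :
    matElem (expHam ε v s * M * expHam ε v t) (v i) (v j)
      = (Real.exp (s * ε i) : ℂ) * ((Real.exp (t * ε j) : ℂ) * matElem M (v i) (v j)) := by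
  have hv' : ∀ a b, star (v a) ⬝ᵥ v b = if a = b then 1 else 0 := hv
  simp only [expHam, Finset.sum_mul, Finset.mul_sum, smul_mul_assoc, mul_smul_comm,
    matElem_sum, matElem_smul, matElem_ketbra_mul_mul_ketbra, hv', smul_eq_mul]
  simp [Finset.mul_sum, mul_ite, ite_mul, Finset.sum_ite_eq, Finset.sum_ite_eq']
  ring

lemma matElem_add {n : ℕ} (M N : Matrix (Fin n) (Fin n) ℂ) (x y : Fin n → ℂ) :
    matElem (M + N) x y = matElem M x y + matElem N x y := by
  simp [matElem, Matrix.add_mulVec, dotProduct_add]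

lemma key {n : ℕ} (r : ℝ) (hr : r ≠ 0) (q : ℝ) (ε : Fin n → ℝ)
    (v φ : Fin n → Fin n → ℂ) (hv : ONFam v) (hφ : ONFam φ)
    (ρ : Matrix (Fin n) (Fin n) ℂ) (hρH : ρᴴ = ρ) (hρtr : ρ.trace = 1)
    (uvals : Fin n → ℝ)
    (hspec : (1/2 : ℂ) • (expHam ε v (-(r * q)) * ρ * expHam ε v (-(r * (1 - q))) +
        expHam ε v (-(r * (1 - q))) * ρ * expHam ε v (-(r * q)))
      = ∑ k, (uvals k : ℂ) • ketbra (φ k) (φ k))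
    (U : Matrix (Fin n) (Fin n) ℂ) (hU : U ∈ Matrix.unitaryGroup (Fin n) ℂ) :
    expUtil (expUtility r) q ε v ρ U
      = (1/r) * (1 - ∑ k, ∑ l,
          Real.exp (r * ε k) * (uvals l * Complex.normSq (matElem U (v k) (φ l)))) := by
  have hv' : ∀ a b, star (v a) ⬝ᵥ v b = if a = b then 1 else 0 := hv
  have hφ' : ∀ a b, star (φ a) ⬝ᵥ φ b = if a = b then 1 else 0 := hφ
  have hcv : ∑ k, ketbra (v k) (v k) = 1 := ONFam.complete hv
  have hcφ : ∑ k, ketbra (φ k) (φ k) = 1 := ONFam.complete hφ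
  have hU1 : Uᴴ * U = 1 := by
    have := (Matrix.mem_unitaryGroup_iff'.mp hU)
    rwa [Matrix.star_eq_conjTranspose] at this
  have hU2 : U * Uᴴ = 1 := by
    have := (Matrix.mem_unitaryGroup_iff.mp hU)
    rwa [Matrix.star_eq_conjTranspose] at this
  set E1 := expHam ε v (-(r * q)) with hE1
  set E2 := expHam ε v (-(r * (1 - q))) with hE2
  set X := E1 * ρ * E2 with hX
  set e1 : Fin n → ℝ := fun i => Real.exp (-(r * q) * ε i) with he1
  set e2 : Fin n → ℝ := fun j => Real.exp (-(r * (1 - q)) * ε j) with he2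
  set e3 : Fin n → ℝ := fun k => Real.exp (r * ε k) with he3
  set T : Fin n → Fin n → Fin n → ℂ := fun i j k =>
    matElem ρ (v i) (v j) * matElem Uᴴ (v j) (v k) * matElem U (v k) (v i) with hT
  -- step 1 : split the utility
  have h1 : expUtil (expUtility r) q ε v ρ U
      = (1/r) * ((∑ i, ∑ j, ∑ k, (T i j k).re)
          - ∑ i, ∑ j, ∑ k, (T i j k).re * (e1 i * e2 j * e3 k)) := by
    simp_rw [expUtil, ← Finset.sum_sub_distrib, Finset.mul_sum]
    apply Finset.sum_congr rfl; intro i _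
    apply Finset.sum_congr rfl; intro j _
    apply Finset.sum_congr rfl; intro k _
    have : expUtility r (q * ε i + (1 - q) * ε j - ε k)
        = (1 - e1 i * e2 j * e3 k) / r := by
      simp only [expUtility, he1, he2, he3]
      rw [← Real.exp_add, ← Real.exp_add]
      ring_nf
    rw [this]
    simp only [hT, he1, he2, he3]
    field_simp
  -- step 2 : the first sum is 1
  have h2 : ∑ i, ∑ j, ∑ k, (T i j k).re = 1 := by
    have hc : ∑ i, ∑ j, ∑ k, T i j k = (1:ℂ) := by
      simp_rw [hT, mul_assoc, ← Finset.mul_sum, insert_basis hcv, hU1, Matrix.mul_one,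
        sum_matElem_diag hcv, hρtr]
    simp_rw [← Complex.re_sum]
    rw [hc, Complex.one_re]
  -- step 3 : second sum
  have hXH : Xᴴ = E2 * ρ * E1 := by
    rw [hX, Matrix.conjTranspose_mul, Matrix.conjTranspose_mul, hE1, hE2,
      expHam_herm, expHam_herm, hρH, Matrix.mul_assoc]
  have h3 : ∑ i, ∑ j, ∑ k, (T i j k).re * (e1 i * e2 j * e3 k)
      = ∑ k, ∑ l, Real.exp (r * ε k) * (uvals l * Complex.normSq (matElem U (v k) (φ l))) := by
    have hc2 : ∀ i j k, ((e1 i * e2 j * e3 k : ℝ) : ℂ) * T i j k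
        = (e3 k : ℝ) * (matElem U (v k) (v i) * (matElem X (v i) (v j) * matElem Uᴴ (v j) (v k))) := by
      intro i j k
      rw [hT, hX, hE1, hE2, matElem_expHam hv, he1, he2]
      push_cast
      ring
    have hsum2 : ∑ i, ∑ j, ∑ k, ((e1 i * e2 j * e3 k : ℝ) : ℂ) * T i j k
        = ∑ k, ((e3 k : ℝ) : ℂ) * matElem (U * (X * Uᴴ)) (v k) (v k) := by
      simp_rw [hc2]
      rw [sum_rot3]
      apply Finset.sum_congr rfl; intro k _
      simp_rw [← Finset.mul_sum, insert_basis hcv]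
    -- the real part of the diagonal element
    have hre : ∀ k, (matElem (U * (X * Uᴴ)) (v k) (v k)).re
        = ∑ l, uvals l * Complex.normSq (matElem U (v k) (φ l)) := by
      intro k
      set z := matElem (U * (X * Uᴴ)) (v k) (v k) with hz
      have hzbar : matElem (U * (Xᴴ * Uᴴ)) (v k) (v k) = star z := by
        have hmat : U * (Xᴴ * Uᴴ) = (U * (X * Uᴴ))ᴴ := by
          simp [Matrix.conjTranspose_mul, Matrix.mul_assoc]
        rw [hmat, matElem_conjTranspose]
      have hrt : matElem (U * ((∑ l, (uvals l : ℂ) • ketbra (φ l) (φ l)) * Uᴴ)) (v k) (v k)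
          = ((∑ l, uvals l * Complex.normSq (matElem U (v k) (φ l)) : ℝ) : ℂ) := by
        simp only [Finset.sum_mul, Finset.mul_sum, smul_mul_assoc, mul_smul_comm,
          matElem_sum, matElem_smul]
        have : ∀ l, matElem (U * (ketbra (φ l) (φ l) * Uᴴ)) (v k) (v k)
            = matElem U (v k) (φ l) * matElem Uᴴ (φ l) (v k) := by
          intro l
          rw [← Matrix.mul_assoc, matElem_mul_ketbra_mul]
        simp_rw [this, matElem_conjTranspose, Complex.star_def, Complex.mul_conj]
        push_cast
        rfl
      have hhalf : matElem (U * ((∑ l, (uvals l : ℂ) • ketbra (φ l) (φ l)) * Uᴴ)) (v k) (v k)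
          = (1/2 : ℂ) * (z + star z) := by
        rw [← hspec, ← hXH, Matrix.smul_mul, Matrix.mul_smul, matElem_smul, Matrix.add_mul,
          Matrix.mul_add, matElem_add, hzbar]
      have : ((∑ l, uvals l * Complex.normSq (matElem U (v k) (φ l)) : ℝ) : ℂ)
          = ((z.re : ℝ) : ℂ) := by
        rw [← hrt, hhalf]
        rw [Complex.star_def, Complex.add_conj]
        push_cast
        ring
      have := Complex.ofReal_inj.mp this
      rw [← this]
    -- put it together
    have hterm : ∀ i j k, (T i j k).re * (e1 i * e2 j * e3 k)
        = (((e1 i * e2 j * e3 k : ℝ) : ℂ) * T i j k).re := by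
      intro i j k
      rw [Complex.re_ofReal_mul]
      ring
    simp_rw [hterm, ← Complex.re_sum, hsum2, Complex.re_sum]
    apply Finset.sum_congr rfl; intro k _
    rw [Complex.re_ofReal_mul, hre, he3, Finset.mul_sum]
  rw [h1, h2, h3]

lemma rowsum {n : ℕ} {v φ : Fin n → Fin n → ℂ} (hv : ONFam v) (hφ : ONFam φ)
    {U : Matrix (Fin n) (Fin n) ℂ} (hU2 : U * Uᴴ = 1) (k : Fin n) :
    ∑ l, Complex.normSq (matElem U (v k) (φ l)) = 1 := by
  have hcφ : ∑ l, ketbra (φ l) (φ l) = 1 := ONFam.complete hφ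
  have hc : ∑ l, matElem U (v k) (φ l) * matElem Uᴴ (φ l) (v k) = 1 := by
    rw [insert_basis hcφ, hU2, matElem_one, hv k k]
    simp
  have : ((∑ l, Complex.normSq (matElem U (v k) (φ l)) : ℝ) : ℂ) = ((1:ℝ):ℂ) := by
    push_cast
    rw [← hc]
    apply Finset.sum_congr rfl; intro l _
    rw [matElem_conjTranspose, Complex.star_def, Complex.mul_conj]
  exact_mod_cast this

lemma colsum {n : ℕ} {v φ : Fin n → Fin n → ℂ} (hv : ONFam v) (hφ : ONFam φ)
    {U : Matrix (Fin n) (Fin n) ℂ} (hU1 : Uᴴ * U = 1) (l : Fin n) :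
    ∑ k, Complex.normSq (matElem U (v k) (φ l)) = 1 := by
  have hcv : ∑ k, ketbra (v k) (v k) = 1 := ONFam.complete hv
  have hc : ∑ k, matElem Uᴴ (φ l) (v k) * matElem U (v k) (φ l) = 1 := by
    rw [insert_basis hcv, hU1, matElem_one, hφ l l]
    simp
  have : ((∑ k, Complex.normSq (matElem U (v k) (φ l)) : ℝ) : ℂ) = ((1:ℝ):ℂ) := by
    push_cast
    rw [← hc]
    apply Finset.sum_congr rfl; intro kk _
    rw [matElem_conjTranspose, Complex.star_def, Complex.normSq_eq_conj_mul_self]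
  exact_mod_cast this

lemma U0_mem {n : ℕ} {v φ : Fin n → Fin n → ℂ} (hv : ONFam v) (hφ : ONFam φ) :
    (∑ m, ketbra (v m) (φ m)) ∈ Matrix.unitaryGroup (Fin n) ℂ := by
  have hcv : ∑ k, ketbra (v k) (v k) = 1 := ONFam.complete hv
  have hφ' : ∀ a b, star (φ a) ⬝ᵥ φ b = if a = b then 1 else 0 := hφ
  rw [Matrix.mem_unitaryGroup_iff, Matrix.star_eq_conjTranspose]
  rw [Matrix.conjTranspose_sum]
  simp_rw [ketbra_conjTranspose, Finset.sum_mul_sum, ketbra_mul_ketbra, hφ']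
  simp only [ite_smul, one_smul, zero_smul, Finset.sum_ite_eq, Finset.mem_univ, if_true]
  exact hcv

lemma U0_matElem {n : ℕ} {v φ : Fin n → Fin n → ℂ} (hv : ONFam v) (hφ : ONFam φ)
    (k l : Fin n) :
    matElem (∑ m, ketbra (v m) (φ m)) (v k) (φ l) = if k = l then 1 else 0 := by
  have hv' : ∀ a b, star (v a) ⬝ᵥ v b = if a = b then 1 else 0 := hv
  have hφ' : ∀ a b, star (φ a) ⬝ᵥ φ b = if a = b then 1 else 0 := hφ
  rw [matElem_sum]
  simp_rw [matElem_ketbra, hv', hφ']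
  simp [Finset.sum_ite_eq, Finset.sum_ite_eq']

/-- for the exponential utility with `r ≠ 0` and arbitrary `q`, the optimal
expected utility equals `(1/r)(1 - ∑ₖ uₖ e^{r εₖ})` where the `uₖ` are the decreasingly
ordered eigenvalues of `ρ̃ = (e^{-rqH_S} ρ e^{-r(1-q)H_S} + e^{-r(1-q)H_S} ρ e^{-rqH_S})/2`. -/
theorem stmt17 {dS : ℕ} (r : ℝ) (hr : r ≠ 0) (q : ℝ)
    (ε : Fin dS → ℝ) (hε : StrictMono ε)
    (v : Fin dS → Fin dS → ℂ) (hv : ONFam v)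
    (ρ : Matrix (Fin dS) (Fin dS) ℂ) (hρ : IsDensity ρ)
    (uvals : Fin dS → ℝ) (φ : Fin dS → Fin dS → ℂ)
    (hφ : ONFam φ) (hdec : Antitone uvals)
    (hspec : (1/2 : ℂ) • (expHam ε v (-(r * q)) * ρ * expHam ε v (-(r * (1 - q))) +
        expHam ε v (-(r * (1 - q))) * ρ * expHam ε v (-(r * q)))
      = ∑ k, (uvals k : ℂ) • ketbra (φ k) (φ k)) :
    IsGreatest
      {x : ℝ | ∃ U ∈ Matrix.unitaryGroup (Fin dS) ℂ,
        x = expUtil (expUtility r) q ε v ρ U}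
      ((1/r) * (1 - ∑ k, uvals k * Real.exp (r * ε k))) := by
  classical
  have hρH : ρᴴ = ρ := hρ.1.1
  have hρtr := hρ.2
  set U₀ : Matrix (Fin dS) (Fin dS) ℂ := ∑ m, ketbra (v m) (φ m) with hU₀
  have hU₀mem : U₀ ∈ Matrix.unitaryGroup (Fin dS) ℂ := U0_mem hv hφ
  have hval : expUtil (expUtility r) q ε v ρ U₀
      = (1/r) * (1 - ∑ k, uvals k * Real.exp (r * ε k)) := by
    rw [key r hr q ε v φ hv hφ ρ hρH hρtr uvals hspec U₀ hU₀mem]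
    congr 2
    simp_rw [hU₀, U0_matElem hv hφ]
    have hterm : ∀ k l : Fin dS,
        Real.exp (r * ε k) * (uvals l * Complex.normSq (if k = l then (1:ℂ) else 0))
        = if l = k then uvals k * Real.exp (r * ε k) else 0 := by
      intro k l
      by_cases h : k = l
      · subst h; simp [mul_comm]
      · simp [h, Ne.symm h]
    simp_rw [hterm]
    simp
  constructor
  · exact ⟨U₀, hU₀mem, hval.symm⟩
  · rintro x ⟨U, hU, rfl⟩
    rw [key r hr q ε v φ hv hφ ρ hρH hρtr uvals hspec U hU]
    have hU1 : Uᴴ * U = 1 := by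
      rw [← Matrix.star_eq_conjTranspose]; exact Matrix.mem_unitaryGroup_iff'.mp hU
    have hU2 : U * Uᴴ = 1 := by
      rw [← Matrix.star_eq_conjTranspose]; exact Matrix.mem_unitaryGroup_iff.mp hU
    set B : Fin dS → Fin dS → ℝ := fun k l => Complex.normSq (matElem U (v k) (φ l)) with hB
    have hBnn : ∀ k l, 0 ≤ B k l := fun k l => Complex.normSq_nonneg _
    have hrow : ∀ k, ∑ l, B k l = 1 := fun k => rowsum hv hφ hU2 k
    have hcol : ∀ l, ∑ k, B k l = 1 := fun l => colsum hv hφ hU1 l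
    rcases lt_or_gt_of_ne hr with hneg | hpos
    · -- r < 0
      have ha : Monotone (fun k => -Real.exp (r * ε k)) := by
        intro i j hij
        simp only [neg_le_neg_iff, Real.exp_le_exp]
        exact mul_le_mul_of_nonpos_left (hε.monotone hij) (le_of_lt hneg)
      have hds := ds_ineq (fun k => -Real.exp (r * ε k)) uvals ha hdec B hBnn hrow hcol
      have hST : ∑ k, ∑ l, Real.exp (r * ε k) * (uvals l * B k l)
          ≤ ∑ k, uvals k * Real.exp (r * ε k) := by
        have e1 : ∑ k, (fun k => -Real.exp (r * ε k)) k * uvals k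
            = -∑ k, uvals k * Real.exp (r * ε k) := by
          rw [← Finset.sum_neg_distrib]
          apply Finset.sum_congr rfl; intro k _; ring
        have e2 : ∑ k, ∑ l, B k l * ((fun k => -Real.exp (r * ε k)) k * uvals l)
            = -∑ k, ∑ l, Real.exp (r * ε k) * (uvals l * B k l) := by
          rw [← Finset.sum_neg_distrib]
          apply Finset.sum_congr rfl; intro k _
          rw [← Finset.sum_neg_distrib]
          apply Finset.sum_congr rfl; intro l _; ring
        rw [e1, e2] at hds
        linarith
      have h1r : (1/r : ℝ) ≤ 0 := by
        apply le_of_lt; exact one_div_neg.mpr hneg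
      have := mul_le_mul_of_nonpos_left (by linarith : (1 : ℝ) - ∑ k, uvals k * Real.exp (r * ε k)
          ≤ 1 - ∑ k, ∑ l, Real.exp (r * ε k) * (uvals l * B k l)) h1r
      linarith
    · -- r > 0
      have ha : Monotone (fun k => Real.exp (r * ε k)) := by
        intro i j hij
        simp only [Real.exp_le_exp]
        exact mul_le_mul_of_nonneg_left (hε.monotone hij) (le_of_lt hpos)
      have hds := ds_ineq (fun k => Real.exp (r * ε k)) uvals ha hdec B hBnn hrow hcol
      have hST : ∑ k, uvals k * Real.exp (r * ε k)
          ≤ ∑ k, ∑ l, Real.exp (r * ε k) * (uvals l * B k l) := by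
        have e1 : ∑ k, (fun k => Real.exp (r * ε k)) k * uvals k
            = ∑ k, uvals k * Real.exp (r * ε k) := by
          apply Finset.sum_congr rfl; intro k _; ring
        have e2 : ∑ k, ∑ l, B k l * ((fun k => Real.exp (r * ε k)) k * uvals l)
            = ∑ k, ∑ l, Real.exp (r * ε k) * (uvals l * B k l) := by
          apply Finset.sum_congr rfl; intro k _
          apply Finset.sum_congr rfl; intro l _; ring
        rw [e1, e2] at hds
        exact hds
      have h1r : (0:ℝ) ≤ 1/r := by positivity
      have := mul_le_mul_of_nonneg_left (by linarith : (1:ℝ) - ∑ k, ∑ l,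
          Real.exp (r * ε k) * (uvals l * B k l)
          ≤ 1 - ∑ k, uvals k * Real.exp (r * ε k)) h1r
      linarith
end Daemonic
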